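/- If X is a locally connected continuum, then the set S(X) of all closed nonempty subsets A of X such that X \ A is disconnected is an F_σ subset of the hyperspace 2^X with the Hausdorff metric; consequently NC*(X) is a G_δ subset of C(X), and hence NC*(X) is a Polish space. -/

import Mathlib

set_option maxHeartbeats 1000000


open TopologicalSpace Topology Metric Set

universe u
variable {X : Type u}

noncomputable def ptOrder [TopologicalSpace X] (p : X) : Cardinal :=
  Cardinal.mk (ConnectedComponents (({p}ᶜ : Set X)))

def endpoints (X : Type u) [TopologicalSpace X] : Set X := {p | ptOrder p = 1}

def ramificationPoints (X : Type u) [TopologicalSpace X] : Set X := {p | 3 ≤ ptOrder p}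

def IsSubcontinuum [TopologicalSpace X] (A : Set X) : Prop := IsClosed A ∧ IsConnected A

def NoSimpleClosedCurve (X : Type u) [TopologicalSpace X] : Prop :=
  ¬ ∃ f : AddCircle (1 : ℝ) → X, IsEmbedding f

def NCstar (X : Type u) [MetricSpace X] : Set (NonemptyCompacts X) :=
  {A | IsConnected (A : Set X) ∧ IsPreconnected ((A : Set X)ᶜ)}

def IsArc [TopologicalSpace X] (A : Set X) (x y : X) : Prop :=
  ∃ f : Set.Icc (0 : ℝ) 1 → X, IsEmbedding f ∧ Set.range f = A ∧
    f ⟨0, by norm_num⟩ = x ∧ f ⟨1, by norm_num⟩ = y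

def IsFiniteGraph (X : Type u) [TopologicalSpace X] : Prop :=
  ∃ (n : ℕ) (A : Fin n → Set X) (e₀ e₁ : Fin n → X),
    (∀ i, IsArc (A i) (e₀ i) (e₁ i)) ∧ (⋃ i, A i) = Set.univ ∧
    ∀ i j, i ≠ j → A i ∩ A j ⊆ ({e₀ i, e₁ i} : Set X) ∩ {e₀ j, e₁ j}

def ZeroDim (Y : Type*) [TopologicalSpace Y] : Prop :=
  ∀ (y : Y) (U : Set Y), IsOpen U → y ∈ U → ∃ V : Set Y, IsClopen V ∧ y ∈ V ∧ V ⊆ U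


/-- Alexandrov: a Gδ subset of a complete second-countable metric space is Polish. -/
theorem my_isGδ_polishSpace {α : Type*} [MetricSpace α] [CompleteSpace α]
    [SecondCountableTopology α] {s : Set α} (hs : IsGδ s) : PolishSpace s := by
  obtain ⟨f, hfo, rfl⟩ := hs.eq_iInter_nat
  by_cases hall : ∀ n, f n = univ
  · have : (⋂ n, f n) = univ := by simp [hall]
    rw [this]; exact isClosed_univ.polishSpace
  classical
  push_neg at hall
  obtain ⟨n₀, hn₀⟩ := hall
  set U : ℕ → Set α := fun n => if f n = univ then f n₀ else f n with hU
  have hUo : ∀ n, IsOpen (U n) := by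
    intro n; simp only [hU]; split <;> [exact hfo n₀; exact hfo n]
  have hUne : ∀ n, ((U n)ᶜ).Nonempty := by
    intro n
    simp only [hU]
    split <;> [skip; skip] <;> rw [nonempty_compl] <;> assumption
  have hInter : (⋂ n, U n) = ⋂ n, f n := by
    apply Subset.antisymm
    · intro x hx
      refine mem_iInter.2 fun n => ?_
      by_cases h : f n = univ
      · rw [h]; trivial
      · have := mem_iInter.1 hx n
        simpa only [hU, if_neg h] using this
    · intro x hx
      refine mem_iInter.2 fun n => ?_
      simp only [hU]
      split
      · exact mem_iInter.1 hx n₀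
      · exact mem_iInter.1 hx n
  rw [← hInter]
  set s : Set α := ⋂ n, U n with hs'
  have hmem : ∀ x ∈ s, ∀ n, 0 < infDist x (U n)ᶜ := by
    intro x hx n
    rw [← (hUo n).isClosed_compl.notMem_iff_infDist_pos (hUne n), notMem_compl_iff]
    exact mem_iInter.1 hx n
  -- the closed embedding into α × (ℕ → ℝ)
  set F : s → α × (ℕ → ℝ) := fun x => (x.1, fun n => (infDist x.1 (U n)ᶜ)⁻¹) with hF
  have hFc : Continuous F := by
    refine continuous_prodMk.2 ⟨continuous_subtype_val, continuous_pi fun n => ?_⟩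
    exact ((continuous_infDist_pt ((U n)ᶜ)).comp continuous_subtype_val).inv₀
      fun x => (hmem x.1 x.2 n).ne'
  have hemb : Topology.IsEmbedding F :=
    Topology.IsEmbedding.of_comp hFc continuous_fst (by exact Topology.IsEmbedding.subtypeVal)
  have hrange : IsClosed (range F) := by
    have : range F = ⋂ n, {p : α × (ℕ → ℝ) | p.2 n * infDist p.1 (U n)ᶜ = 1} := by
      ext p
      constructor
      · rintro ⟨x, rfl⟩
        refine mem_iInter.2 fun n => ?_
        exact inv_mul_cancel₀ (hmem x.1 x.2 n).ne'
      · intro hp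
        have h1 : ∀ n, p.1 ∈ U n := by
          intro n
          have h := mem_iInter.1 hp n
          by_contra hnot
          rw [mem_setOf_eq, infDist_zero_of_mem (by simpa using hnot), mul_zero] at h
          exact zero_ne_one h
        have hmem1 : p.1 ∈ s := mem_iInter.2 h1
        refine ⟨⟨p.1, hmem1⟩, ?_⟩
        refine Prod.ext rfl (funext fun n => ?_)
        have h := mem_iInter.1 hp n
        exact (eq_inv_of_mul_eq_one_left h).symm
    rw [this]
    exact isClosed_iInter fun n => isClosed_eq
      (((continuous_apply n).comp continuous_snd).mul
        ((continuous_infDist_pt ((U n)ᶜ)).comp continuous_fst)) continuous_const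
  exact (Topology.IsClosedEmbedding.mk hemb hrange).polishSpace


/-- In a locally connected metric space, two points of an open preconnected set `W`
lie in a connected set whose closure is contained in `W`. -/
theorem my_chain {X : Type*} [MetricSpace X] [LocallyConnectedSpace X] {W : Set X}
    (hWo : IsOpen W) (hWc : IsPreconnected W) {x y : X} (hx : x ∈ W) (hy : y ∈ W) :
    ∃ K : Set X, IsConnected K ∧ x ∈ K ∧ y ∈ K ∧ closure K ⊆ W := by
  set R : Set X := {z | z ∈ W ∧ ∃ K : Set X, IsConnected K ∧ x ∈ K ∧ z ∈ K ∧ closure K ⊆ W}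
    with hR
  -- a connected open neighborhood with closure inside W, around any point of W
  have key : ∀ z ∈ W, ∃ V : Set X, IsOpen V ∧ z ∈ V ∧ IsConnected V ∧ closure V ⊆ W := by
    intro z hz
    obtain ⟨r, hr, hball⟩ := Metric.isOpen_iff.1 hWo z hz
    obtain ⟨V, hVsub, hVo, hzV, hVc⟩ :=
      locallyConnectedSpace_iff_subsets_isOpen_isConnected.1 ‹_› z
        (Metric.ball z (r/2)) (Metric.ball_mem_nhds z (by positivity : (0:ℝ) < r/2))
    refine ⟨V, hVo, hzV, hVc, ?_⟩
    refine Subset.trans (closure_mono hVsub) ?_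
    refine Subset.trans Metric.closure_ball_subset_closedBall ?_
    exact Subset.trans (Metric.closedBall_subset_ball (by linarith)) hball
  have hRopen : IsOpen R := by
    refine isOpen_iff_mem_nhds.2 fun z hz => ?_
    obtain ⟨hzW, K, hKc, hxK, hzK, hKcl⟩ := hz
    obtain ⟨V, hVo, hzV, hVc, hVcl⟩ := key z hzW
    refine Filter.mem_of_superset (hVo.mem_nhds hzV) fun w hw => ?_
    refine ⟨hVcl (subset_closure hw), K ∪ V, ?_, Or.inl hxK, Or.inr hw, ?_⟩
    · exact hKc.union ⟨z, hzK, hzV⟩ hVc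
    · rw [closure_union]; exact union_subset hKcl hVcl
  have hR2open : IsOpen {z | z ∈ W ∧ z ∉ R} := by
    refine isOpen_iff_mem_nhds.2 fun z hz => ?_
    obtain ⟨hzW, hzR⟩ := hz
    obtain ⟨V, hVo, hzV, hVc, hVcl⟩ := key z hzW
    refine Filter.mem_of_superset (hVo.mem_nhds hzV) fun w hw => ?_
    refine ⟨hVcl (subset_closure hw), fun hwR => hzR ?_⟩
    obtain ⟨hwW, K, hKc, hxK, hwK, hKcl⟩ := hwR
    refine ⟨hzW, K ∪ V, hKc.union ⟨w, hwK, hw⟩ hVc, Or.inl hxK, Or.inr hzV, ?_⟩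
    rw [closure_union]; exact union_subset hKcl hVcl
  have hxR : x ∈ R := ⟨hx, {x}, isConnected_singleton, rfl, rfl, by
    rw [closure_singleton]; exact singleton_subset_iff.2 hx⟩
  by_contra hcon
  have hyR : y ∉ R := fun h => hcon (by obtain ⟨_, K, h1, h2, h3, h4⟩ := h; exact ⟨K, h1, h2, h3, h4⟩)
  obtain ⟨z, hz⟩ := hWc R {z | z ∈ W ∧ z ∉ R} hRopen hR2open
    (fun w hw => by by_cases h : w ∈ R; exacts [Or.inl h, Or.inr ⟨hw, h⟩])
    ⟨x, hx, hxR⟩ ⟨y, hy, hy, hyR⟩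
  exact hz.2.2.2 hz.2.1


def myF (X : Type*) [MetricSpace X] (k : ℕ) : Set (NonemptyCompacts X) :=
  {A | ∃ x y : X, 1/(k+1:ℝ) ≤ infDist x (A : Set X) ∧ 1/(k+1:ℝ) ≤ infDist y (A : Set X) ∧
    ∀ C : Set X, IsPreconnected C → x ∈ C → y ∈ C → ¬ (C ⊆ (A : Set X)ᶜ)}

section Helpers
variable {X : Type*} [MetricSpace X] [CompactSpace X]


theorem myF_union :
    {A : NonemptyCompacts X | ¬ IsPreconnected ((A : Set X)ᶜ)} = ⋃ k, myF X k := by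
  ext A
  simp only [mem_setOf_eq, mem_iUnion]
  constructor
  · intro hA
    rw [IsPreconnected] at hA
    push_neg at hA
    obtain ⟨u, v, huo, hvo, hcover, ⟨x, hxc, hxu⟩, ⟨y, hyc, hyv⟩, hempty⟩ := hA
    rw [eq_empty_iff_forall_notMem] at hempty
    have hAcl : IsClosed (A : Set X) := A.isCompact.isClosed
    have hxd : 0 < infDist x (A : Set X) :=
      (hAcl.notMem_iff_infDist_pos A.nonempty).1 hxc
    have hyd : 0 < infDist y (A : Set X) :=
      (hAcl.notMem_iff_infDist_pos A.nonempty).1 hyc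
    obtain ⟨k, hk⟩ := exists_nat_one_div_lt (lt_min hxd hyd)
    refine ⟨k, x, y, ?_, ?_, fun C hC hxC hyC hCsub => ?_⟩
    · exact le_of_lt (lt_of_lt_of_le hk (min_le_left _ _))
    · exact le_of_lt (lt_of_lt_of_le hk (min_le_right _ _))
    · obtain ⟨z, hzC, hzu, hzv⟩ := hC u v huo hvo (hCsub.trans hcover) ⟨x, hxC, hxu⟩ ⟨y, hyC, hyv⟩
      exact hempty z ⟨hCsub hzC, hzu, hzv⟩
  · rintro ⟨k, x, y, hxd, hyd, hprop⟩ hpre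
    have hkpos : (0:ℝ) < 1/(k+1:ℝ) := by positivity
    have hx : x ∈ ((A : Set X)ᶜ) := fun h =>
      absurd (infDist_zero_of_mem h ▸ hxd) (by linarith)
    have hy : y ∈ ((A : Set X)ᶜ) := fun h =>
      absurd (infDist_zero_of_mem h ▸ hyd) (by linarith)
    exact hprop _ hpre hx hy Subset.rfl

theorem myConn_closed :
    IsClosed {A : NonemptyCompacts X | IsConnected (A : Set X)} := by
  rw [← isOpen_compl_iff]
  refine Metric.isOpen_iff.2 fun A hA => ?_
  have hA' : ¬ IsPreconnected (A : Set X) := by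
    intro h
    exact hA ⟨A.nonempty, h⟩
  rw [IsPreconnected] at hA'
  push_neg at hA'
  obtain ⟨u, v, huo, hvo, hcover, ⟨x, hxA, hxu⟩, ⟨y, hyA, hyv⟩, hempty⟩ := hA'
  rw [eq_empty_iff_forall_notMem] at hempty
  set B : Set X := (A : Set X) \ v with hB
  set C : Set X := (A : Set X) \ u with hC
  have hAcl : IsClosed (A : Set X) := A.isCompact.isClosed
  have hBcl : IsClosed B := hAcl.sdiff hvo
  have hCcl : IsClosed C := hAcl.sdiff huo
  have hBC : B ∪ C = (A : Set X) := by
    apply Subset.antisymm (union_subset diff_subset diff_subset)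
    intro z hz
    rcases hcover hz with h | h
    · exact Or.inl ⟨hz, fun hv => hempty z ⟨hz, h, hv⟩⟩
    · exact Or.inr ⟨hz, fun hu => hempty z ⟨hz, hu, h⟩⟩
  have hdisj : Disjoint B C := by
    rw [disjoint_left]
    rintro z ⟨hzA, hzv⟩ ⟨_, hzu⟩
    rcases hcover hzA with h | h
    · exact hzu h
    · exact hzv h
  obtain ⟨δ, hδpos, hthick⟩ := hdisj.exists_thickenings (hBcl.isCompact) hCcl
  refine ⟨δ, hδpos, fun A' hA' => ?_⟩
  rw [mem_ball, NonemptyCompacts.dist_eq] at hA'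
  intro hA'conn
  have hfin : EMetric.hausdorffEdist ((A' : Set X)) (A : Set X) ≠ ⊤ :=
    hausdorffEdist_ne_top_of_nonempty_of_bounded A'.nonempty A.nonempty
      A'.isCompact.isBounded A.isCompact.isBounded
  have hfin' : EMetric.hausdorffEdist ((A : Set X)) (A' : Set X) ≠ ⊤ := by
    rw [EMetric.hausdorffEdist, Metric.hausdorffEDist_comm]; exact hfin
  -- A' is covered by the two disjoint thickenings
  have hcov : (A' : Set X) ⊆ thickening δ B ∪ thickening δ C := by
    intro a' ha'
    have h1 : infDist a' (A : Set X) < δ :=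
      lt_of_le_of_lt (infDist_le_hausdorffDist_of_mem ha' hfin) hA'
    obtain ⟨a, haA, hd⟩ := (infDist_lt_iff A.nonempty).1 h1
    rw [← hBC] at haA
    rcases haA with h | h
    · exact Or.inl ((mem_thickening_iff).2 ⟨a, h, hd⟩)
    · exact Or.inr ((mem_thickening_iff).2 ⟨a, h, hd⟩)
  have hmeet : ∀ D : Set X, D.Nonempty → D ⊆ (A : Set X) →
      ((A' : Set X) ∩ thickening δ D).Nonempty := by
    rintro D ⟨b, hb⟩ hDA
    have h0 := infDist_le_hausdorffDist_of_mem (hDA hb) hfin'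
    rw [hausdorffDist_comm] at h0
    have h1 : infDist b (A' : Set X) < δ := lt_of_le_of_lt h0 hA'
    obtain ⟨a', ha', hd⟩ := (infDist_lt_iff A'.nonempty).1 h1
    exact ⟨a', ha', (mem_thickening_iff).2 ⟨b, hb, by rwa [dist_comm]⟩⟩
  obtain ⟨z, hz, hz1, hz2⟩ := hA'conn.isPreconnected (thickening δ B) (thickening δ C)
    isOpen_thickening isOpen_thickening hcov
    (hmeet B ⟨x, hxA, fun hv => hempty x ⟨hxA, hxu, hv⟩⟩ diff_subset)
    (hmeet C ⟨y, hyA, fun hu => hempty y ⟨hyA, hu, hyv⟩⟩ diff_subset)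
  exact (disjoint_left.1 hthick) hz1 hz2

end Helpers
theorem myF_closed {X : Type*} [MetricSpace X] [CompactSpace X] [LocallyConnectedSpace X] (k : ℕ) : IsClosed (myF X k) := by
  refine isClosed_of_closure_subset fun A hA => ?_
  obtain ⟨As, hAs, hAtend⟩ := mem_closure_iff_seq_limit.1 hA
  choose xs ys hxs hys hprop using hAs
  -- extract convergent subsequences of the witnesses
  obtain ⟨x, -, φ₁, hφ₁, hx⟩ := isCompact_univ.tendsto_subseq (x := xs) (fun n => mem_univ _)
  obtain ⟨y, -, φ₂, hφ₂, hy⟩ := isCompact_univ.tendsto_subseq (x := ys ∘ φ₁) (fun n => mem_univ _)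
  set ψ : ℕ → ℕ := φ₁ ∘ φ₂ with hψ
  have hψmono : StrictMono ψ := hφ₁.comp hφ₂
  have hxψ : Filter.Tendsto (xs ∘ ψ) Filter.atTop (𝓝 x) := hx.comp hφ₂.tendsto_atTop
  have hyψ : Filter.Tendsto (ys ∘ ψ) Filter.atTop (𝓝 y) := hy
  have hAψ : Filter.Tendsto (As ∘ ψ) Filter.atTop (𝓝 A) := hAtend.comp hψmono.tendsto_atTop
  -- limits of the distance estimates
  have hdist : ∀ (zs : ℕ → X) (z : X), Filter.Tendsto zs Filter.atTop (𝓝 z) →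
      (∀ n, 1/(k+1:ℝ) ≤ infDist (zs n) ((As (ψ n) : Set X))) →
      1/(k+1:ℝ) ≤ infDist z (A : Set X) := by
    intro zs z hz hle
    have : Filter.Tendsto (fun n => infDist (zs n) ((As (ψ n) : Set X)))
        Filter.atTop (𝓝 (infDist z (A : Set X))) := by
      have hcont : Continuous (fun p : X × NonemptyCompacts X => infDist p.1 (p.2 : Set X)) :=
        lipschitz_infDist.continuous
      have h2 := (hcont.tendsto (z, A)).comp (hz.prodMk_nhds hAψ)
      exact h2
    exact ge_of_tendsto' this hle
  have hxd : 1/(k+1:ℝ) ≤ infDist x (A : Set X) :=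
    hdist (xs ∘ ψ) x hxψ (fun n => hxs (ψ n))
  have hyd : 1/(k+1:ℝ) ≤ infDist y (A : Set X) :=
    hdist (ys ∘ ψ) y hyψ (fun n => hys (ψ n))
  have hkpos : (0:ℝ) < 1/(k+1:ℝ) := by positivity
  refine ⟨x, y, hxd, hyd, fun C hC hxC hyC hCsub => ?_⟩
  -- derive a contradiction
  have hAcl : IsClosed (A : Set X) := A.isCompact.isClosed
  have hAco : IsOpen ((A : Set X)ᶜ) := hAcl.isOpen_compl
  have hxA : x ∈ (A : Set X)ᶜ := fun h => absurd (infDist_zero_of_mem h ▸ hxd) (by linarith)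
  set W : Set X := connectedComponentIn ((A : Set X)ᶜ) x with hW
  have hWo : IsOpen W := hAco.connectedComponentIn
  have hCW : C ⊆ W := hC.subset_connectedComponentIn hxC hCsub
  obtain ⟨K, hKc, hxK, hyK, hKcl⟩ :=
    my_chain hWo isPreconnected_connectedComponentIn (hCW hxC) (hCW hyC)
  have hKW : closure K ⊆ (A : Set X)ᶜ := hKcl.trans (connectedComponentIn_subset _ _)
  -- minimum distance from closure K to A
  have hKcomp : IsCompact (closure K) := isClosed_closure.isCompact
  obtain ⟨z₀, hz₀, hz₀min⟩ := hKcomp.exists_isMinOn ⟨x, subset_closure hxK⟩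
    ((continuous_infDist_pt (A : Set X)).continuousOn)
  rw [isMinOn_iff] at hz₀min
  set δ : ℝ := infDist z₀ (A : Set X) with hδ
  have hδpos : 0 < δ := by
    rw [hδ, ← hAcl.notMem_iff_infDist_pos A.nonempty]
    exact hKW hz₀
  -- connected open neighborhoods of x and y inside small balls
  obtain ⟨Vx, hVxsub, hVxo, hxVx, hVxc⟩ :=
    locallyConnectedSpace_iff_subsets_isOpen_isConnected.1 ‹_› x
      (ball x (1/(2*(k+1:ℝ)))) (ball_mem_nhds x (by positivity))
  obtain ⟨Vy, hVysub, hVyo, hyVy, hVyc⟩ :=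
    locallyConnectedSpace_iff_subsets_isOpen_isConnected.1 ‹_› y
      (ball y (1/(2*(k+1:ℝ)))) (ball_mem_nhds y (by positivity))
  set ε : ℝ := min δ (1/(2*(k+1:ℝ))) with hε
  have hεpos : 0 < ε := lt_min hδpos (by positivity)
  set K' : Set X := (closure K ∪ Vx) ∪ Vy with hK'
  have hK'conn : IsPreconnected K' := by
    have h1 : IsConnected (closure K ∪ Vx) :=
      hKc.closure.union ⟨x, subset_closure hxK, hxVx⟩ hVxc
    exact (h1.union ⟨y, Or.inl (subset_closure hyK), hyVy⟩ hVyc).isPreconnected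
  have hK'far : ∀ z ∈ K', ε ≤ infDist z (A : Set X) := by
    rintro z ((hz | hz) | hz)
    · exact le_trans (min_le_left _ _) (hz₀min z hz)
    · refine le_trans (min_le_right _ _) ?_
      have h1 : infDist x (A : Set X) ≤ infDist z (A : Set X) + dist x z :=
        infDist_le_infDist_add_dist
      have h2 : dist x z < 1/(2*(k+1:ℝ)) := by
        rw [dist_comm]; exact mem_ball.1 (hVxsub hz)
      have : 1/(k+1:ℝ) - 1/(2*(k+1:ℝ)) ≤ infDist z (A : Set X) := by linarith
      have hhalf : 1/(2*(k+1:ℝ)) = 1/(k+1:ℝ) - 1/(2*(k+1:ℝ)) := by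
        field_simp
        ring
      linarith
    · refine le_trans (min_le_right _ _) ?_
      have h1 : infDist y (A : Set X) ≤ infDist z (A : Set X) + dist y z :=
        infDist_le_infDist_add_dist
      have h2 : dist y z < 1/(2*(k+1:ℝ)) := by
        rw [dist_comm]; exact mem_ball.1 (hVysub hz)
      have : 1/(k+1:ℝ) - 1/(2*(k+1:ℝ)) ≤ infDist z (A : Set X) := by linarith
      have hhalf : 1/(2*(k+1:ℝ)) = 1/(k+1:ℝ) - 1/(2*(k+1:ℝ)) := by
        field_simp
        ring
      linarith
  -- pick a large index
  have h1 : ∀ᶠ n in Filter.atTop, dist (As (ψ n)) A < ε :=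
    (Metric.tendsto_nhds.1 hAψ) ε hεpos
  have h2 : ∀ᶠ n in Filter.atTop, xs (ψ n) ∈ Vx := hxψ (hVxo.mem_nhds hxVx)
  have h3 : ∀ᶠ n in Filter.atTop, ys (ψ n) ∈ Vy := hyψ (hVyo.mem_nhds hyVy)
  obtain ⟨n, hn1, hn2, hn3⟩ := (h1.and (h2.and h3)).exists
  -- K' avoids As (ψ n)
  have hK'sub : K' ⊆ ((As (ψ n) : Set X))ᶜ := by
    intro z hz
    intro hzA
    have hfin : EMetric.hausdorffEdist ((As (ψ n) : Set X)) (A : Set X) ≠ ⊤ :=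
      hausdorffEdist_ne_top_of_nonempty_of_bounded (As (ψ n)).nonempty A.nonempty
        (As (ψ n)).isCompact.isBounded A.isCompact.isBounded
    have := infDist_le_hausdorffDist_of_mem hzA hfin
    have heq : hausdorffDist ((As (ψ n) : Set X)) (A : Set X) = dist (As (ψ n)) A :=
      (NonemptyCompacts.dist_eq).symm
    rw [heq] at this
    exact absurd (hK'far z hz) (by linarith [hn1])
  -- contradiction with the defining property of As (ψ n)
  exact hprop (ψ n) K' hK'conn (Or.inl (Or.inr hn2)) (Or.inr hn3) hK'sub

theorem my_isGδ_preimage {α β : Type*} [TopologicalSpace α] [TopologicalSpace β] {s : Set β}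
    (hs : IsGδ s) {f : α → β} (hf : Continuous f) : IsGδ (f ⁻¹' s) := by
  obtain ⟨T, hTo, hTc, rfl⟩ := hs
  rw [sInter_eq_biInter, preimage_iInter₂]
  exact IsGδ.biInter hTc fun t ht => ((hTo t ht).preimage hf).isGδ

theorem cut_sets_Fsigma_and_NCstar_polish [MetricSpace X] [CompactSpace X] [ConnectedSpace X] [Nontrivial X] [LocallyConnectedSpace X] :
    (∃ F : ℕ → Set (NonemptyCompacts X), (∀ k, IsClosed (F k)) ∧
      {A : NonemptyCompacts X | ¬ IsPreconnected ((A : Set X)ᶜ)} = ⋃ k, F k) ∧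
    IsGδ {A : {B : NonemptyCompacts X // IsConnected (B : Set X)} |
      IsPreconnected ((A.1 : Set X)ᶜ)} ∧
    PolishSpace ↥(NCstar X) := by
  constructor
  · exact ⟨myF X, myF_closed, myF_union⟩
  have hGδ : IsGδ {A : NonemptyCompacts X | IsPreconnected ((A : Set X)ᶜ)} := by
    have : {A : NonemptyCompacts X | IsPreconnected ((A : Set X)ᶜ)} = ⋂ k, (myF X k)ᶜ := by
      rw [← compl_iUnion, ← myF_union]
      ext A
      simp [mem_setOf_eq, not_not]
    rw [this]
    exact IsGδ.iInter_of_isOpen fun k => (myF_closed k).isOpen_compl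
  refine ⟨?_, ?_⟩
  · exact my_isGδ_preimage hGδ continuous_subtype_val
  · have hNC : NCstar X = {A : NonemptyCompacts X | IsConnected (A : Set X)} ∩
        {A : NonemptyCompacts X | IsPreconnected ((A : Set X)ᶜ)} := by
      ext A; exact Iff.rfl
    have : IsGδ (NCstar X) := by
      rw [hNC]
      exact (myConn_closed.isGδ).inter hGδ
    exact my_isGδ_polishSpace this
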